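/- Let N, l be positive integers with l < N, let L(ξ) = ∑_{j=0}^{l} C(N-1+j,j) sin^{2j}(ξ/2), q₁ = sup_{|ξ|≤π} |L(ξ)| = ∑_{j=0}^{l} C(N-1+j,j), and q₂ = |L(2π/3)|. Fix an integer J ≥ 2. Then for all real ξ with |ξ| > 1, ∏_{j=1}^{∞} |L(2^{-j}ξ)| ≤ exp(C₂/3) · q₁ q₂^{J-1} · |ξ|^{log₂(q₁^{1/(J-1)} q₂)}, where C₂ = (∑_{j=1}^{l} C(N-1+j,j))/4. -/

import Mathlib

open Real Finset

noncomputable def distPartL (N l : ℕ) (ξ : ℝ) : ℝ :=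
  ∑ j ∈ Finset.range (l + 1), ((N - 1 + j).choose j : ℝ) * Real.sin (ξ / 2) ^ (2 * j)

noncomputable def polyP (N l : ℕ) (t : ℝ) : ℝ :=
  ∑ j ∈ Finset.range (l + 1), ((N - 1 + j).choose j : ℝ) * t ^ j

noncomputable def derivP (N l : ℕ) (t : ℝ) : ℝ :=
  ∑ j ∈ Finset.range l, ((N + j : ℕ) : ℝ) * ((N - 1 + j).choose j : ℝ) * t ^ j

lemma choose_identity_nat (N : ℕ) (hN : 1 ≤ N) (j : ℕ) :
    (N + j) * ((N - 1 + j).choose j) = (j + 1) * ((N - 1 + (j + 1)).choose (j + 1)) := by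
  obtain ⟨M, rfl⟩ : ∃ M, N = M + 1 := ⟨N - 1, by omega⟩
  simp only [Nat.add_sub_cancel]
  have h := Nat.add_one_mul_choose_eq (M + j) j
  rw [show M + 1 + j = (M + j) + 1 by omega, show M + (j + 1) = (M + j) + 1 by omega]
  simpa [Nat.succ_eq_add_one, Nat.mul_comm] using h

lemma choose_identity (N : ℕ) (hN : 1 ≤ N) (j : ℕ) :
    ((N + j : ℕ) : ℝ) * ((N - 1 + j).choose j : ℝ) =
      ((j : ℝ) + 1) * ((N - 1 + (j + 1)).choose (j + 1) : ℝ) := by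
  exact_mod_cast congrArg (Nat.cast : ℕ → ℝ) (choose_identity_nat N hN j)

lemma polyP_eq_shift (N l : ℕ) (t : ℝ) :
    polyP N l t = (∑ j ∈ Finset.range l, ((N - 1 + (j+1)).choose (j+1) : ℝ) * t ^ (j+1)) + 1 := by
  unfold polyP
  rw [Finset.sum_range_succ']
  simp

lemma hasDerivAt_polyP (N l : ℕ) (hN : 1 ≤ N) (t : ℝ) :
    HasDerivAt (polyP N l) (derivP N l t) t := by
  have h : HasDerivAt (polyP N l)
      (∑ j ∈ Finset.range (l + 1), ((N - 1 + j).choose j : ℝ) * ((j : ℝ) * t ^ (j - 1))) t := by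
    unfold polyP
    refine HasDerivAt.fun_sum (fun j _ => ?_)
    exact (hasDerivAt_pow j t).const_mul _
  convert h using 1
  rw [Finset.sum_range_succ']
  simp only [Nat.cast_zero, zero_mul, mul_zero, add_zero]
  apply Finset.sum_congr rfl
  intro j _
  rw [show ((N + j : ℕ) : ℝ) * ((N - 1 + j).choose j : ℝ) =
      ((j : ℝ) + 1) * ((N - 1 + (j + 1)).choose (j + 1) : ℝ) from choose_identity N hN j]
  simp only [Nat.add_sub_cancel]
  push_cast
  ring

lemma one_le_polyP (N l : ℕ) {t : ℝ} (ht : 0 ≤ t) : 1 ≤ polyP N l t := by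
  rw [polyP_eq_shift]
  have h2 : 0 ≤ ∑ j ∈ Finset.range l, ((N - 1 + (j+1)).choose (j+1) : ℝ) * t ^ (j+1) := by
    apply Finset.sum_nonneg
    intro j _
    positivity
  linarith

lemma polyP_pos (N l : ℕ) {t : ℝ} (ht : 0 ≤ t) : 0 < polyP N l t :=
  lt_of_lt_of_le one_pos (one_le_polyP N l ht)

lemma polyP_mono (N l : ℕ) {s t : ℝ} (hs : 0 ≤ s) (hst : s ≤ t) :
    polyP N l s ≤ polyP N l t := by
  apply Finset.sum_le_sum
  intro j _
  have := pow_le_pow_left₀ hs hst j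
  have hc : (0:ℝ) ≤ ((N - 1 + j).choose j : ℝ) := by positivity
  nlinarith

lemma derivP_nonneg (N l : ℕ) {t : ℝ} (ht : 0 ≤ t) : 0 ≤ derivP N l t := by
  apply Finset.sum_nonneg
  intro j _
  positivity

lemma mul_derivP_le (N l : ℕ) (hN : 1 ≤ N) {t : ℝ} (ht : 0 ≤ t) :
    t * derivP N l t ≤ (l : ℝ) * polyP N l t := by
  rw [polyP_eq_shift, mul_add, mul_one]
  have hl0 : (0:ℝ) ≤ l := by positivity
  have h3 : t * derivP N l t
      ≤ ∑ j ∈ Finset.range l, (l:ℝ) * (((N - 1 + (j+1)).choose (j+1) : ℝ) * t ^ (j+1)) := by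
    unfold derivP
    rw [Finset.mul_sum]
    apply Finset.sum_le_sum
    intro j hj
    have hj' : (j : ℝ) + 1 ≤ (l : ℝ) := by exact_mod_cast Finset.mem_range.mp hj
    have hid := choose_identity N hN j
    have e1 : t * (((N + j : ℕ) : ℝ) * ((N - 1 + j).choose j : ℝ) * t ^ j)
        = ((N + j : ℕ) : ℝ) * ((N - 1 + j).choose j : ℝ) * t ^ (j+1) := by ring
    rw [e1, hid]
    have hp : (0:ℝ) ≤ ((N - 1 + (j+1)).choose (j+1) : ℝ) * t ^ (j+1) := by positivity
    nlinarith
  rw [Finset.mul_sum]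
  linarith

lemma polyP_le_derivP (N l : ℕ) (hl : 0 < l) (hlN : l < N) {t : ℝ} (ht0 : 0 ≤ t)
    (ht : t ≤ 3/4) : (2 * l / 3 : ℝ) * polyP N l t ≤ derivP N l t := by
  have hN : 1 ≤ N := by omega
  -- split off top term of polyP
  have hsplit : polyP N l t
      = (∑ j ∈ Finset.range l, ((N - 1 + j).choose j : ℝ) * t ^ j)
        + ((N - 1 + l).choose l : ℝ) * t ^ l := by
    unfold polyP; rw [Finset.sum_range_succ]
  rw [hsplit]
  have key : (2 * l / 3 : ℝ) * (((N - 1 + l).choose l : ℝ) * t ^ l)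
      ≤ ∑ j ∈ Finset.range l,
          ((((N + j : ℕ) : ℝ)) - 2 * l / 3) * (((N - 1 + j).choose j : ℝ) * t ^ j) := by
    have hmem : l - 1 ∈ Finset.range l := by
      rw [Finset.mem_range]; omega
    have hterm_nonneg : ∀ j ∈ Finset.range l,
        0 ≤ ((((N + j : ℕ) : ℝ)) - 2 * l / 3) * (((N - 1 + j).choose j : ℝ) * t ^ j) := by
      intro j _
      have h1 : (2 * (l:ℝ) / 3) ≤ ((N + j : ℕ) : ℝ) := by
        have : (l:ℝ) + 1 ≤ ((N + j : ℕ):ℝ) := by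
          push_cast
          have h5 : (l:ℝ) + 1 ≤ N := by exact_mod_cast (by omega : l + 1 ≤ N)
          have hj : (0:ℝ) ≤ j := by positivity
          linarith
        linarith
      have h2 : (0:ℝ) ≤ ((N - 1 + j).choose j : ℝ) * t ^ j := by positivity
      nlinarith
    have hsingle := Finset.single_le_sum hterm_nonneg hmem
    refine le_trans ?_ hsingle
    -- term at j = l-1 dominates (2l/3) * C_l * t^l
    have hid := choose_identity N hN (l - 1)
    rw [show l - 1 + 1 = l by omega] at hid
    -- hid : (N + (l-1) : ℕ) * C_{l-1} = ((l-1:ℕ) + 1) * C_l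
    have hcast : ((l - 1 : ℕ) : ℝ) + 1 = (l : ℝ) := by
      have : ((l - 1 : ℕ) : ℝ) = (l : ℝ) - 1 := by
        push_cast [Nat.cast_sub (by omega : 1 ≤ l)]; ring
      rw [this]; ring
    rw [hcast] at hid
    have hK : ((N + (l - 1) : ℕ) : ℝ) = (N : ℝ) + (l : ℝ) - 1 := by
      push_cast [Nat.cast_sub (by omega : 1 ≤ l)]; ring
    have htl : t ^ l = t * t ^ (l - 1) := by
      rw [← pow_succ']
      congr 1
      omega
    rw [htl]
    set a : ℝ := ((N - 1 + (l - 1)).choose (l - 1) : ℝ) with ha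
    set b : ℝ := ((N - 1 + l).choose l : ℝ) with hb
    -- hid : (N + l - 1) * a = l * b
    rw [hK] at hid
    have ha0 : 0 ≤ a := by positivity
    have htpow : (0:ℝ) ≤ t ^ (l - 1) := by positivity
    have hNl : (l:ℝ) + 1 ≤ (N:ℝ) := by exact_mod_cast hlN
    have hl1 : (1:ℝ) ≤ (l:ℝ) := by exact_mod_cast hl
    -- goal: (2l/3) * (b * (t * t^(l-1))) ≤ ((N+(l-1)) - 2l/3) * (a * t^(l-1))
    rw [hK]
    -- (2l/3) * b * t ≤ (2l/3)*b*(3/4) = (l/2) * b = (N+l-1)/2 * a, need ≤ (N+l-1-2l/3)*a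
    have hlb : (l:ℝ) * b = ((N:ℝ) + l - 1) * a := hid.symm
    nlinarith [mul_le_mul_of_nonneg_left (mul_le_mul_of_nonneg_left ht (by positivity : (0:ℝ) ≤ 2 * (l:ℝ) / 3 * b)) htpow, mul_nonneg ha0 htpow, mul_nonneg (mul_nonneg (by positivity : (0:ℝ) ≤ (l:ℝ)) (by positivity : (0:ℝ) ≤ b)) htpow]
  have e1 : derivP N l t - (2 * l / 3 : ℝ) * (∑ j ∈ Finset.range l, ((N - 1 + j).choose j : ℝ) * t ^ j)
      = ∑ j ∈ Finset.range l,
          ((((N + j : ℕ) : ℝ)) - 2 * l / 3) * (((N - 1 + j).choose j : ℝ) * t ^ j) := by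
    unfold derivP
    rw [Finset.mul_sum, ← Finset.sum_sub_distrib]
    apply Finset.sum_congr rfl
    intro j _
    ring
  linarith [key, e1.ge, e1.le]

lemma pair_poly_le (N l : ℕ) (hl : 0 < l) (hlN : l < N) {y : ℝ} (hy1 : 3/4 ≤ y) (hy2 : y ≤ 1) :
    polyP N l y * polyP N l (4*y - 4*y^2) ≤ polyP N l (3/4) ^ 2 := by
  have hN : 1 ≤ N := by omega
  set h : ℝ → ℝ := fun x => polyP N l x * polyP N l (4*x - 4*x^2) with hh
  have hderiv : ∀ x : ℝ, HasDerivAt h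
      (derivP N l x * polyP N l (4*x - 4*x^2)
        + polyP N l x * (derivP N l (4*x - 4*x^2) * (4 - 8*x))) x := by
    intro x
    have inner : HasDerivAt (fun u : ℝ => 4*u - 4*u^2) (4 - 8*x) x := by
      have h1 := (hasDerivAt_pow 2 x).const_mul (4:ℝ)
      have h2 := (hasDerivAt_id x).const_mul (4:ℝ)
      have e : (4:ℝ) - 8*x = 4 - 4*(2*x^1) := by ring
      rw [e]
      simpa using h2.fun_sub h1
    have outer := (hasDerivAt_polyP N l hN (4*x - 4*x^2)).comp x inner
    exact (hasDerivAt_polyP N l hN x).mul outer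
  have hanti : AntitoneOn h (Set.Icc (3/4 : ℝ) 1) := by
    apply antitoneOn_of_deriv_nonpos (convex_Icc _ _)
    · exact Continuous.continuousOn (by
        have : Differentiable ℝ h := fun x => (hderiv x).differentiableAt
        exact this.continuous)
    · intro x _
      exact (hderiv x).differentiableAt.differentiableWithinAt
    · intro x hx
      rw [interior_Icc, Set.mem_Ioo] at hx
      obtain ⟨hx1, hx2⟩ := hx
      rw [(hderiv x).deriv]
      set z : ℝ := 4*x - 4*x^2 with hz
      have hz0 : 0 < z := by nlinarith
      have hz34 : z ≤ 3/4 := by nlinarith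
      have hx0 : (0:ℝ) < x := by linarith
      have A := mul_derivP_le N l hN (le_of_lt hx0)
      have B := polyP_le_derivP N l hl hlN (le_of_lt hz0) hz34
      have hPy : (1:ℝ) ≤ polyP N l x := one_le_polyP N l (le_of_lt hx0)
      have hPz : (1:ℝ) ≤ polyP N l z := one_le_polyP N l (le_of_lt hz0)
      have hdy : (0:ℝ) ≤ derivP N l x := derivP_nonneg N l (le_of_lt hx0)
      have hdz : (0:ℝ) ≤ derivP N l z := derivP_nonneg N l (le_of_lt hz0)
      have hl1 : (1:ℝ) ≤ (l:ℝ) := by exact_mod_cast hl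
      have h16 : (3:ℝ) ≤ 16*x^2 - 8*x := by nlinarith
      have hPP : (0:ℝ) ≤ polyP N l x * polyP N l z := by nlinarith
      have hint1 : derivP N l x * x * polyP N l z ≤ (l:ℝ) * polyP N l x * polyP N l z := by
        have := mul_le_mul_of_nonneg_right A (by linarith : (0:ℝ) ≤ polyP N l z)
        nlinarith
      have hint2 : ((8*x - 4) * polyP N l x) * ((2 * l / 3) * polyP N l z)
          ≤ ((8*x - 4) * polyP N l x) * derivP N l z := by
        apply mul_le_mul_of_nonneg_left B
        nlinarith
      nlinarith [mul_le_mul_of_nonneg_right h16 (mul_nonneg (by positivity : (0:ℝ) ≤ (l:ℝ)/3) hPP), mul_pos hx0 (lt_of_lt_of_le one_pos hPz)]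
  have h34 : h (3/4) = polyP N l (3/4) ^ 2 := by
    simp only [hh]
    norm_num
    ring
  have := hanti (Set.mem_Icc.mpr ⟨le_refl _, by norm_num⟩) (Set.mem_Icc.mpr ⟨hy1, hy2⟩) hy1
  rw [h34] at this
  exact this

noncomputable def distPartL' (N l : ℕ) (ξ : ℝ) : ℝ :=
  ∑ j ∈ Finset.range (l + 1), ((N - 1 + j).choose j : ℝ) * Real.sin (ξ / 2) ^ (2 * j)

lemma distPartL'_eq (N l : ℕ) (ξ : ℝ) :
    distPartL' N l ξ = polyP N l (Real.sin (ξ / 2) ^ 2) := by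
  unfold distPartL' polyP
  apply Finset.sum_congr rfl
  intro j _
  rw [pow_mul]

lemma sin_sq_double (x : ℝ) :
    Real.sin x ^ 2 = 4 * (Real.sin (x/2) ^ 2) - 4 * (Real.sin (x/2) ^ 2) ^ 2 := by
  have h := Real.sin_two_mul (x/2)
  rw [show 2 * (x/2) = x by ring] at h
  have hc := Real.sin_sq_add_cos_sq (x/2)
  linear_combination (Real.sin x + 2 * Real.sin (x/2) * Real.cos (x/2)) * h
    + 4 * Real.sin (x/2) ^ 2 * hc

lemma sin_sq_mem (x : ℝ) : Real.sin (x/2) ^ 2 ∈ Set.Icc (0:ℝ) 1 :=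
  ⟨sq_nonneg _, Real.sin_sq_le_one _⟩

lemma one_le_distPartL' (N l : ℕ) (x : ℝ) : 1 ≤ distPartL' N l x := by
  rw [distPartL'_eq]; exact one_le_polyP N l (sq_nonneg _)

lemma distPartL'_good (N l : ℕ) {x : ℝ} (h : Real.sin (x/2) ^ 2 ≤ 3/4) :
    distPartL' N l x ≤ polyP N l (3/4) := by
  rw [distPartL'_eq]; exact polyP_mono N l (sq_nonneg _) h

lemma distPartL'_pair (N l : ℕ) (hl : 0 < l) (hlN : l < N) {x : ℝ}
    (h : 3/4 < Real.sin (x/2) ^ 2) :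
    distPartL' N l x * distPartL' N l (2*x) ≤ polyP N l (3/4) ^ 2 := by
  rw [distPartL'_eq, distPartL'_eq]
  rw [show 2*x/2 = x by ring, sin_sq_double x]
  exact pair_poly_le N l hl hlN (le_of_lt h) (Real.sin_sq_le_one _)

lemma bad_next (N l : ℕ) {x : ℝ} (h : 3/4 < Real.sin (x/2) ^ 2) :
    Real.sin (x/4) ^ 2 ≤ 3/4 := by
  have hd := sin_sq_double (x/2)
  rw [show x/2/2 = x/4 by ring] at hd
  by_contra hc
  push_neg at hc
  have h1 : Real.sin (x/4) ^ 2 ≤ 1 := Real.sin_sq_le_one _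
  nlinarith

lemma distPartL'_le_q1 (N l : ℕ) (x : ℝ) :
    distPartL' N l x ≤ ∑ j ∈ Finset.range (l + 1), ((N - 1 + j).choose j : ℝ) := by
  rw [distPartL'_eq]
  have h := polyP_mono N l (sq_nonneg (Real.sin (x/2))) (Real.sin_sq_le_one (x/2))
  apply h.trans
  unfold polyP
  simp

lemma sum_Icc_shift (l : ℕ) (f : ℕ → ℝ) :
    ∑ j ∈ Finset.Icc 1 l, f j = ∑ j ∈ Finset.range l, f (j+1) := by
  rw [← Finset.Ico_add_one_right_eq_Icc, Finset.sum_Ico_eq_sum_range]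
  simp [add_comm]

lemma distPartL'_le_exp (N l : ℕ) (x : ℝ) :
    distPartL' N l x ≤ Real.exp ((∑ j ∈ Finset.Icc 1 l, ((N - 1 + j).choose j : ℝ)) / 4 * x^2) := by
  set S := ∑ j ∈ Finset.Icc 1 l, ((N - 1 + j).choose j : ℝ) with hS
  set u := Real.sin (x/2) ^ 2 with hu
  have hu0 : 0 ≤ u := sq_nonneg _
  have hu1 : u ≤ 1 := Real.sin_sq_le_one _
  have hux : u ≤ x^2/4 := by
    have := Real.sin_sq_le_sq (x := x/2)
    rw [hu]
    nlinarith
  have h1 : distPartL' N l x ≤ 1 + S * u := by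
    rw [distPartL'_eq, polyP_eq_shift, hS, sum_Icc_shift l (fun j => ((N - 1 + j).choose j : ℝ)),
      Finset.sum_mul]
    have : ∑ j ∈ Finset.range l, ((N - 1 + (j+1)).choose (j+1) : ℝ) * u ^ (j+1)
        ≤ ∑ j ∈ Finset.range l, ((N - 1 + (j+1)).choose (j+1) : ℝ) * u := by
      apply Finset.sum_le_sum
      intro j _
      have hp : u ^ (j+1) ≤ u := by
        calc u ^ (j+1) ≤ u ^ 1 := pow_le_pow_of_le_one hu0 hu1 (by omega)
        _ = u := pow_one u
      have hc : (0:ℝ) ≤ ((N - 1 + (j+1)).choose (j+1) : ℝ) := by positivity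
      nlinarith
    linarith
  have hS0 : 0 ≤ S := by
    apply Finset.sum_nonneg; intro j _; positivity
  have h2 : 1 + S * u ≤ 1 + S / 4 * x^2 := by nlinarith
  have h3 : S / 4 * x^2 + 1 ≤ Real.exp (S / 4 * x^2) := Real.add_one_le_exp _
  linarith

lemma q2_eq (N l : ℕ) : distPartL' N l (2 * π / 3) = polyP N l (3/4) := by
  rw [distPartL'_eq, show 2 * π / 3 / 2 = π / 3 by ring, Real.sin_pi_div_three]
  congr 1
  rw [div_pow, Real.sq_sqrt (by norm_num : (3:ℝ) ≥ 0)]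
  norm_num

noncomputable def Pr (N l : ℕ) (n : ℕ) (ξ : ℝ) : ℝ :=
  ∏ j ∈ Finset.range n, distPartL' N l (ξ / 2 ^ (j + 1))

lemma Pr_one_le (N l : ℕ) (n : ℕ) (ξ : ℝ) : 1 ≤ Pr N l n ξ := by
  unfold Pr
  have := Finset.prod_le_prod (s := Finset.range n) (f := fun _ => (1:ℝ))
    (g := fun j => distPartL' N l (ξ / 2 ^ (j + 1)))
    (fun _ _ => by norm_num) (fun j _ => one_le_distPartL' N l _)
  simpa using this

lemma Pr_succ (N l : ℕ) (n : ℕ) (ξ : ℝ) :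
    Pr N l (n + 1) ξ = distPartL' N l (ξ / 2) * Pr N l n (ξ / 2) := by
  unfold Pr
  rw [Finset.prod_range_succ']
  rw [mul_comm]
  congr 1
  · norm_num
  · apply Finset.prod_congr rfl
    intro j _
    congr 1
    rw [pow_succ']
    ring

lemma main_ind (N l : ℕ) (hl : 0 < l) (hlN : l < N) :
    ∀ n : ℕ, ∀ ξ : ℝ,
      (Real.sin (ξ/4) ^ 2 ≤ 3/4 → Pr N l n ξ ≤ polyP N l (3/4) ^ n) ∧
      Pr N l n ξ ≤ polyP N l 1 * polyP N l (3/4) ^ (n - 1) := by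
  have hq2_1 : (1:ℝ) ≤ polyP N l (3/4) := one_le_polyP N l (by norm_num)
  have hq1_1 : (1:ℝ) ≤ polyP N l 1 := one_le_polyP N l (by norm_num)
  have hq2q1 : polyP N l (3/4) ≤ polyP N l 1 := polyP_mono N l (by norm_num) (by norm_num)
  have hLle : ∀ x : ℝ, distPartL' N l x ≤ polyP N l 1 := by
    intro x
    rw [distPartL'_eq]
    exact polyP_mono N l (sq_nonneg _) (Real.sin_sq_le_one _)
  intro n
  induction n using Nat.strong_induction_on with
  | _ n IH =>
    intro ξ
    match n with
    | 0 =>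
      constructor
      · intro _; simp [Pr]
      · simp only [Pr, Finset.range_zero, Finset.prod_empty]
        calc (1:ℝ) ≤ polyP N l 1 := hq1_1
        _ = polyP N l 1 * 1 := (mul_one _).symm
        _ ≤ polyP N l 1 * polyP N l (3/4) ^ (0 - 1) := by
            apply mul_le_mul_of_nonneg_left _ (by linarith)
            exact one_le_pow₀ hq2_1
    | (m + 1) =>
      have hPr : Pr N l (m+1) ξ = distPartL' N l (ξ/2) * Pr N l m (ξ/2) := Pr_succ N l m ξ
      by_cases hbad : Real.sin (ξ/4) ^ 2 ≤ 3/4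
      · -- first factor good
        have hfirst : distPartL' N l (ξ/2) ≤ polyP N l (3/4) := by
          apply distPartL'_good
          rw [show ξ/2/2 = ξ/4 by ring]
          exact hbad
        have hi : Pr N l (m+1) ξ ≤ polyP N l (3/4) ^ (m+1) := by
          by_cases h2 : Real.sin (ξ/8) ^ 2 ≤ 3/4
          · -- second factor also good
            have hrest : Pr N l m (ξ/2) ≤ polyP N l (3/4) ^ m := by
              apply ((IH m (by omega)) (ξ/2)).1
              rw [show ξ/2/4 = ξ/8 by ring]
              exact h2
            rw [hPr, pow_succ']
            exact mul_le_mul hfirst hrest (by linarith [Pr_one_le N l m (ξ/2)]) (by linarith)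
          · -- second factor bad: pair it
            push_neg at h2
            match m with
            | 0 =>
              rw [hPr]
              simp only [Pr, Finset.range_zero, Finset.prod_empty, mul_one]
              calc distPartL' N l (ξ/2) ≤ polyP N l (3/4) := hfirst
              _ = polyP N l (3/4) ^ 1 := (pow_one _).symm
            | (k + 1) =>
              have hPr2 : Pr N l (k+1) (ξ/2) = distPartL' N l (ξ/4) * Pr N l k (ξ/4) := by
                have := Pr_succ N l k (ξ/2)
                rw [show ξ/2/2 = ξ/4 by ring] at this
                exact this
              have hpair : distPartL' N l (ξ/4) * distPartL' N l (ξ/2) ≤ polyP N l (3/4) ^ 2 := by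
                have := distPartL'_pair N l hl hlN (x := ξ/4) (by
                  rw [show ξ/4/2 = ξ/8 by ring]; exact h2)
                rw [show 2*(ξ/4) = ξ/2 by ring] at this
                exact this
              have hrest : Pr N l k (ξ/4) ≤ polyP N l (3/4) ^ k := by
                apply ((IH k (by omega)) (ξ/4)).1
                rw [show ξ/4/4 = ξ/16 by ring]
                have := bad_next N l (x := ξ/4) (by rw [show ξ/4/2 = ξ/8 by ring]; exact h2)
                rw [show ξ/4/4 = ξ/16 by ring] at this
                exact this
              rw [hPr, hPr2, show (k+1+1) = k+2 by ring, pow_add]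
              calc distPartL' N l (ξ/2) * (distPartL' N l (ξ/4) * Pr N l k (ξ/4))
                  = (distPartL' N l (ξ/4) * distPartL' N l (ξ/2)) * Pr N l k (ξ/4) := by ring
                _ ≤ polyP N l (3/4) ^ 2 * polyP N l (3/4) ^ k := by
                    apply mul_le_mul hpair hrest (by linarith [Pr_one_le N l k (ξ/4)])
                    positivity
                _ = polyP N l (3/4) ^ k * polyP N l (3/4) ^ 2 := by ring
        refine ⟨fun _ => hi, ?_⟩
        calc Pr N l (m+1) ξ ≤ polyP N l (3/4) ^ (m+1) := hi
          _ = polyP N l (3/4) * polyP N l (3/4) ^ m := by rw [pow_succ']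
          _ ≤ polyP N l 1 * polyP N l (3/4) ^ m := by
              apply mul_le_mul_of_nonneg_right hq2q1 (by positivity)
          _ = polyP N l 1 * polyP N l (3/4) ^ (m + 1 - 1) := by norm_num
      · -- first factor bad
        push_neg at hbad
        constructor
        · intro h; linarith
        · have hnext : Real.sin (ξ/8) ^ 2 ≤ 3/4 := by
            have := bad_next N l (x := ξ/2) (by rw [show ξ/2/2 = ξ/4 by ring]; exact hbad)
            rw [show ξ/2/4 = ξ/8 by ring] at this
            exact this
          have hrest : Pr N l m (ξ/2) ≤ polyP N l (3/4) ^ m := by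
            apply ((IH m (by omega)) (ξ/2)).1
            rw [show ξ/2/4 = ξ/8 by ring]
            exact hnext
          rw [hPr, show m + 1 - 1 = m by omega]
          exact mul_le_mul (hLle _) hrest (by linarith [Pr_one_le N l m (ξ/2)]) (by linarith)


lemma distPartL_eq_aux : distPartL = distPartL' := rfl

lemma pow_arg_sq (ξ : ℝ) (j : ℕ) : (ξ / 2 ^ (j+1)) ^ 2 = ξ^2 * (1/4 : ℝ)^(j+1) := by
  rw [div_pow, ← pow_mul, mul_comm (j+1) 2, pow_mul]
  norm_num
  rw [div_eq_mul_inv, ← inv_pow]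
  norm_num

theorem distPart_infinite_product_bound_large (N l : ℕ) (hl : 0 < l) (hlN : l < N)
    (J : ℕ) (hJ : 2 ≤ J) (ξ : ℝ) (hξ : 1 < |ξ|) :
    (∏' j : ℕ, |distPartL N l (ξ / 2 ^ (j + 1))|) ≤
      Real.exp (((∑ j ∈ Finset.Icc 1 l, ((N - 1 + j).choose j : ℝ)) / 4) / 3) *
        ((∑ j ∈ Finset.range (l + 1), ((N - 1 + j).choose j : ℝ)) *
          |distPartL N l (2 * π / 3)| ^ (J - 1)) *
        |ξ| ^ (Real.logb 2
          ((∑ j ∈ Finset.range (l + 1), ((N - 1 + j).choose j : ℝ)) ^ ((1 : ℝ) / (J - 1)) *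
            |distPartL N l (2 * π / 3)|)) := by
  have hN : 1 ≤ N := by omega
  set q1 : ℝ := ∑ j ∈ Finset.range (l + 1), ((N - 1 + j).choose j : ℝ) with hq1def
  set S : ℝ := ∑ j ∈ Finset.Icc 1 l, ((N - 1 + j).choose j : ℝ) with hSdef
  have hq1poly : polyP N l 1 = q1 := by simp [polyP, hq1def]
  have habs2 : |distPartL N l (2 * π / 3)| = polyP N l (3/4) := by
    rw [distPartL_eq_aux, q2_eq]
    exact abs_of_pos (polyP_pos N l (by norm_num))
  rw [habs2]
  set q2 : ℝ := polyP N l (3/4) with hq2def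
  have hq2_1 : (1:ℝ) ≤ q2 := one_le_polyP N l (by norm_num)
  have hq1_1 : (1:ℝ) ≤ q1 := by rw [← hq1poly]; exact one_le_polyP N l (by norm_num)
  have hq2q1 : q2 ≤ q1 := by rw [← hq1poly]; exact polyP_mono N l (by norm_num) (by norm_num)
  have hS0 : (0:ℝ) ≤ S := by
    rw [hSdef]; apply Finset.sum_nonneg; intro j _; positivity
  -- rewrite integrand
  have hLpos : ∀ x : ℝ, 0 < distPartL' N l x :=
    fun x => lt_of_lt_of_le one_pos (one_le_distPartL' N l x)
  rw [show (∏' j : ℕ, |distPartL N l (ξ / 2 ^ (j + 1))|)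
      = ∏' j : ℕ, distPartL' N l (ξ / 2 ^ (j + 1)) from
    tprod_congr fun j => by rw [distPartL_eq_aux]; exact abs_of_pos (hLpos _)]
  -- logs
  set g : ℕ → ℝ := fun j => Real.log (distPartL' N l (ξ / 2 ^ (j+1))) with hgdef
  have hgpos : ∀ j, 0 ≤ g j := fun j => Real.log_nonneg (one_le_distPartL' N l _)
  have hgb : ∀ j, g j ≤ S/4 * ξ^2 * (1/4:ℝ)^(j+1) := by
    intro j
    have hb := distPartL'_le_exp N l (ξ / 2 ^ (j+1))
    rw [← hSdef, pow_arg_sq ξ j] at hb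
    calc g j ≤ Real.log (Real.exp (S / 4 * (ξ^2 * (1/4:ℝ)^(j+1)))) := by
          exact Real.log_le_log (hLpos _) hb
      _ = S/4 * ξ^2 * (1/4:ℝ)^(j+1) := by rw [Real.log_exp]; ring
  have hgeo : Summable (fun j : ℕ => ((1:ℝ)/4) ^ (j+1)) :=
    (summable_nat_add_iff 1).mpr (summable_geometric_of_lt_one (by norm_num) (by norm_num))
  have hsumb : Summable (fun j : ℕ => S/4 * ξ^2 * (1/4:ℝ)^(j+1)) := hgeo.mul_left _
  have hgsum : Summable g := Summable.of_nonneg_of_le hgpos hgb hsumb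
  have htp : (∏' j : ℕ, distPartL' N l (ξ / 2 ^ (j+1))) = Real.exp (∑' j, g j) := by
    have hp : HasProd (fun j : ℕ => distPartL' N l (ξ / 2 ^ (j+1))) (Real.exp (∑' j, g j)) := by
      have h0 := hgsum.hasSum.rexp
      have he : (Real.exp ∘ g) = fun j : ℕ => distPartL' N l (ξ / 2 ^ (j+1)) :=
        funext fun j => Real.exp_log (hLpos _)
      rwa [he] at h0
    exact hp.tprod_eq
  -- choose n with 2^(n-1) < |ξ| ≤ 2^n
  obtain ⟨m0, hm0⟩ := pow_unbounded_of_one_lt |ξ| (by norm_num : (1:ℝ) < 2)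
  have hex : ∃ n : ℕ, |ξ| ≤ 2 ^ n := ⟨m0, le_of_lt hm0⟩
  have hn2 : |ξ| ≤ 2 ^ (Nat.find hex) := Nat.find_spec hex
  set n := Nat.find hex with hndef
  have hn0 : 0 < n := by
    by_contra h
    push_neg at h
    have hzero : n = 0 := by omega
    rw [hzero] at hn2
    norm_num at hn2
    linarith
  have hn1 : (2:ℝ) ^ (n - 1) < |ξ| := by
    have h := Nat.find_min hex (show n - 1 < n by omega)
    push_neg at h
    exact h
  have hsplit := Summable.sum_add_tsum_nat_add (f := g) n hgsum
  rw [htp, ← hsplit, Real.exp_add]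
  have hhead : Real.exp (∑ j ∈ Finset.range n, g j) = Pr N l n ξ := by
    rw [Real.exp_sum]
    unfold Pr
    exact Finset.prod_congr rfl fun j _ => Real.exp_log (hLpos _)
  rw [hhead]
  have hxi2 : ξ^2 ≤ (4:ℝ)^n := by
    have h2 : |ξ|^2 ≤ ((2:ℝ)^n)^2 := pow_le_pow_left₀ (abs_nonneg ξ) hn2 2
    calc ξ^2 = |ξ|^2 := (sq_abs ξ).symm
    _ ≤ ((2:ℝ)^n)^2 := h2
    _ = 4^n := by rw [← pow_mul, mul_comm, pow_mul]; norm_num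
  have htail : (∑' j : ℕ, g (j + n)) ≤ S/4/3 := by
    have hs1 : Summable (fun j : ℕ => g (j + n)) := (summable_nat_add_iff n).mpr hgsum
    have hs2 : Summable (fun j : ℕ => (S/4 * ξ^2 * (1/4:ℝ)^(n+1)) * (1/4:ℝ)^j) :=
      (summable_geometric_of_lt_one (by norm_num) (by norm_num)).mul_left _
    have hle : ∀ j : ℕ, g (j + n) ≤ (S/4 * ξ^2 * (1/4:ℝ)^(n+1)) * (1/4:ℝ)^j := by
      intro j
      calc g (j + n) ≤ S/4 * ξ^2 * (1/4:ℝ)^(j + n + 1) := hgb (j + n)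
      _ = (S/4 * ξ^2 * (1/4:ℝ)^(n+1)) * (1/4:ℝ)^j := by
          rw [show j + n + 1 = (n+1) + j by ring, pow_add]
          ring
    have h2 := Summable.tsum_le_tsum hle hs1 hs2
    rw [tsum_mul_left, tsum_geometric_of_lt_one (by norm_num) (by norm_num)] at h2
    have h4 : ξ^2 * (1/4:ℝ)^(n+1) ≤ 1/4 := by
      have e : (1/4:ℝ)^(n+1) = ((4:ℝ)^(n+1))⁻¹ := by rw [one_div, inv_pow]
      rw [e]
      have h6 : ξ^2 * ((4:ℝ)^(n+1))⁻¹ ≤ (4:ℝ)^n * ((4:ℝ)^(n+1))⁻¹ :=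
        mul_le_mul_of_nonneg_right hxi2 (by positivity)
      have h7 : (4:ℝ)^n * ((4:ℝ)^(n+1))⁻¹ = 1/4 := by
        rw [pow_succ]
        have : (0:ℝ) < (4:ℝ)^n := by positivity
        field_simp
      linarith
    have h8 : S/4 * ξ^2 * (1/4:ℝ)^(n+1) * (1 - 1/4:ℝ)⁻¹ ≤ S/4/3 := by
      have h9 : S/4 * (ξ^2 * (1/4:ℝ)^(n+1)) ≤ S/4 * (1/4) :=
        mul_le_mul_of_nonneg_left h4 (by linarith)
      have e2 : ((1:ℝ) - 1/4)⁻¹ = 4/3 := by norm_num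
      rw [e2]
      nlinarith
    linarith
  have hPrle : Pr N l n ξ ≤ q1 * q2^(n-1) := by
    have h := (main_ind N l hl hlN n ξ).2
    rwa [hq1poly] at h
  have hexp : Real.exp (∑' j : ℕ, g (j + n)) ≤ Real.exp (S/4/3) := Real.exp_le_exp.mpr htail
  have hJe : (0:ℝ) ≤ (1:ℝ)/((J:ℝ) - 1) := by
    have : (2:ℝ) ≤ (J:ℝ) := by exact_mod_cast hJ
    apply div_nonneg <;> linarith
  set X : ℝ := q1 ^ ((1:ℝ)/((J:ℝ) - 1)) * q2 with hXdef
  have h1e : (1:ℝ) ≤ q1 ^ ((1:ℝ)/((J:ℝ) - 1)) := by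
    calc (1:ℝ) = q1 ^ (0:ℝ) := (Real.rpow_zero q1).symm
    _ ≤ q1 ^ ((1:ℝ)/((J:ℝ) - 1)) := Real.rpow_le_rpow_of_exponent_le hq1_1 hJe
  have hXq2 : q2 ≤ X := le_mul_of_one_le_left (by linarith) h1e
  have hX1 : (1:ℝ) ≤ X := le_trans hq2_1 hXq2
  have hα0 : 0 ≤ Real.logb 2 X := Real.logb_nonneg (by norm_num) hX1
  have h2α : (2:ℝ) ^ Real.logb 2 X = X := Real.rpow_logb (by norm_num) (by norm_num) (by linarith)
  have hswap : ((2:ℝ)^(n-1)) ^ Real.logb 2 X = ((2:ℝ) ^ Real.logb 2 X) ^ (n-1) := by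
    rw [← Real.rpow_natCast ((2:ℝ) ^ Real.logb 2 X) (n-1), ← Real.rpow_mul (by norm_num),
      ← Real.rpow_natCast (2:ℝ) (n-1), ← Real.rpow_mul (by norm_num), mul_comm]
  have hq2n : q2^(n-1) ≤ |ξ| ^ Real.logb 2 X := by
    calc q2^(n-1) ≤ X^(n-1) := pow_le_pow_left₀ (by linarith) hXq2 _
    _ = ((2:ℝ) ^ Real.logb 2 X)^(n-1) := by rw [h2α]
    _ = ((2:ℝ)^(n-1)) ^ Real.logb 2 X := hswap.symm
    _ ≤ |ξ| ^ Real.logb 2 X := Real.rpow_le_rpow (by positivity) (le_of_lt hn1) hα0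
  have hq2Jn : (0:ℝ) ≤ q1 * q2 ^ (n-1) :=
    mul_nonneg (by linarith) (pow_nonneg (by linarith) _)
  calc Pr N l n ξ * Real.exp (∑' j : ℕ, g (j + n))
      ≤ (q1 * q2^(n-1)) * Real.exp (S/4/3) :=
        mul_le_mul hPrle hexp (Real.exp_pos _).le hq2Jn
    _ ≤ Real.exp (S/4/3) * (q1 * q2^(J-1)) * |ξ| ^ Real.logb 2 X := by
        have h1 : (1:ℝ) ≤ q2^(J-1) := one_le_pow₀ hq2_1
        have hri : (0:ℝ) ≤ |ξ| ^ Real.logb 2 X := Real.rpow_nonneg (abs_nonneg ξ) _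
        have h3 : q2^(n-1) ≤ q2^(J-1) * (|ξ| ^ Real.logb 2 X) := by
          calc q2^(n-1) ≤ |ξ| ^ Real.logb 2 X := hq2n
          _ = 1 * (|ξ| ^ Real.logb 2 X) := (one_mul _).symm
          _ ≤ q2^(J-1) * (|ξ| ^ Real.logb 2 X) := mul_le_mul_of_nonneg_right h1 hri
        have h4 : q1 * q2^(n-1) ≤ q1 * (q2^(J-1) * (|ξ| ^ Real.logb 2 X)) :=
          mul_le_mul_of_nonneg_left h3 (by linarith)
        have h5 := mul_le_mul_of_nonneg_left h4 (Real.exp_pos (S/4/3)).le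
        calc (q1 * q2^(n-1)) * Real.exp (S/4/3)
            = Real.exp (S/4/3) * (q1 * q2^(n-1)) := by ring
        _ ≤ Real.exp (S/4/3) * (q1 * (q2^(J-1) * (|ξ| ^ Real.logb 2 X))) := h5
        _ = Real.exp (S/4/3) * (q1 * q2^(J-1)) * (|ξ| ^ Real.logb 2 X) := by ring
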